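/- Let (R,F) be a rooted graph with e_{F₋} > 1, and let 0 < γ ≤ 1, 0 < q = q(n) ≤ 1, and A ≥ 1. Then for n sufficiently large, every hypergraph G_R ∈ R(R,n) which is (F,Aq)-upper-extensible satisfies δ(E(G_R,F), γ⁻¹ n^{−1/m₂(R,F,−log_n q)}) ≤ γ · e_{F₋} · 2^{e_{F₋}²} · n^{|R|}(Aq)^{e_{F[R]}} / |E(G_R)|. -/

import Mathlib

open Filter Asymptotics
open scoped Classical ENNReal

noncomputable section

namespace OG

/-! ### Finite graphs, represented as subgraphs of a complete graph -/

abbrev Sub (W : Type*) := (⊤ : SimpleGraph W).Subgraph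

variable {W U X : Type*}

/-- number of vertices -/
def nverts (G : Sub W) : ℕ := G.verts.ncard

/-- number of edges -/
def nedges (G : Sub W) : ℕ := G.edgeSet.ncard

/-- the density `d(G) = e_G / v_G` -/
def dd (G : Sub W) : ℝ := (nedges G : ℝ) / (nverts G : ℝ)

/-- the `1`-density `d₁(G) = e_G / (v_G - 1)` -/
def d1 (G : Sub W) : ℝ := (nedges G : ℝ) / ((nverts G : ℝ) - 1)

/-- the `2`-density `d₂(G) = (e_G - 1)/(v_G - 2)` -/
def d2 (G : Sub W) : ℝ := ((nedges G : ℝ) - 1) / ((nverts G : ℝ) - 2)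

/-- `m(G) = max_{H ⊆ G} d(H)` -/
def mD (G : Sub W) : ℝ := ⨆ H : {H : Sub W // H ≤ G}, dd H.1

/-- `m₁(G) = max_{H ⊆ G} d₁(H)` -/
def m1D (G : Sub W) : ℝ := ⨆ H : {H : Sub W // H ≤ G}, d1 H.1

/-- `m₂(G) = max_{H ⊆ G} d₂(H)` (over subgraphs with at least one edge;
on edgeless subgraphs the convention `0/0 = 0` applies) -/
def m2D (G : Sub W) : ℝ := ⨆ H : {H : Sub W // H ≤ G ∧ 1 ≤ nedges H}, d2 H.1

/-- `G` is 2-balanced if `m₂(G) = d₂(G)`. -/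
def TwoBalanced (G : Sub W) : Prop := m2D G = d2 G

/-- the recursively defined densities `m̄ʳ₂(G)`. -/
def mbar (G : Sub W) : ℕ → ℝ
  | 0 => 0
  | 1 => mD G
  | k + 2 => ⨆ H : {H : Sub W // H ≤ G},
      (nedges H.1 : ℝ) / ((nverts H.1 : ℝ) - 2 + 1 / mbar G (k + 1))

/-- view a `SimpleGraph` on a vertex type `V` as a graph with vertex set all of `V`. -/
def toSub {V : Type*} (G : SimpleGraph V) : Sub V where
  verts := Set.univ
  Adj := G.Adj
  adj_sub := fun h => G.ne_of_adj h
  edge_vert := fun _ => Set.mem_univ _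
  symm := G.symm

/-! ### Rooted graphs -/

/-- number of edges of `G` inside the root set `R`, i.e. `e_{G[R]}`. -/
def rInEdges (R : Set W) (G : Sub W) : ℕ := {e ∈ G.edgeSet | ∀ x ∈ e, x ∈ R}.ncard

/-- the density `d(R,G) = ē_G / v̄_G` of a rooted graph (with the roots `R ∩ V(G)`). -/
def rdd (R : Set W) (G : Sub W) : ℝ :=
  ((nedges G : ℝ) - (rInEdges R G : ℝ)) / ((nverts G : ℝ) - ((G.verts ∩ R).ncard : ℝ))

/-- `m(R,G) = max_{H ⊆ G} d(R ∩ V(H), H)` -/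
def mRooted (R : Set W) (G : Sub W) : ℝ := ⨆ H : {H : Sub W // H ≤ G}, rdd R H.1

/-- a rooted graph is balanced if its density attains `m(R,G)`. -/
def BalancedRooted (R : Set W) (G : Sub W) : Prop := mRooted R G = rdd R G

/-- the rooted `2`-density `d₂(R,G,t)`, valued in `ℝ≥0∞`. -/
def d2t (R : Set W) (G : Sub W) (t : ℝ) : ℝ≥0∞ :=
  if 0 < (nverts G : ℝ) - 2 - t * (rInEdges R G : ℝ) then
    ENNReal.ofReal ((((nedges G : ℝ) - (rInEdges R G : ℝ)) - 1) /
      ((nverts G : ℝ) - 2 - t * (rInEdges R G : ℝ)))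
  else ⊤

/-- `m₂(R,G,t)`, the maximum of `d₂(R ∩ V(H), H, t)` over subgraphs `H ⊆ G` with `ē_H > 1`. -/
def m2t (R : Set W) (G : Sub W) (t : ℝ) : ℝ≥0∞ :=
  ⨆ H : {H : Sub W // H ≤ G ∧ rInEdges R H + 2 ≤ nedges H}, d2t R H.1 t


/-! ### Products of rooted graphs and the families 𝓕ᵏ -/

/-- `e` is a non-root edge of `Fg` w.r.t. the root set `R`. -/
def NRe (Fg : Sub W) (R : Set W) (e : Sym2 W) : Prop := e ∈ Fg.edgeSet ∧ ¬ ∀ x ∈ e, x ∈ R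

/-- `P` (together with the placement maps `φ`, `ψ`) is a copy of the product `(R,Fg) × (h₁h₂, H)`:
it is obtained from `Fg` by attaching to every non-root edge of `Fg` a new copy of `H`,
rooted at that edge (the edge itself being kept iff `h₁h₂ ∈ E(H)`). -/
def IsProdCopyData (Fg : Sub W) (R : Set W) (H : Sub U) (h₁ h₂ : U) (P : Sub X)
    (φ : W → X) (ψ : Sym2 W → U → X) : Prop :=
  Set.InjOn φ Fg.verts ∧
  (∀ e, NRe Fg R e → Set.InjOn (ψ e) H.verts) ∧
  (∀ e, NRe Fg R e → ∀ x y : W, e = s(x, y) →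
      ({ψ e h₁, ψ e h₂} : Set X) = {φ x, φ y}) ∧
  (∀ e e', NRe Fg R e → NRe Fg R e' → e ≠ e' →
      Disjoint (ψ e '' (H.verts \ {h₁, h₂})) (ψ e' '' (H.verts \ {h₁, h₂}))) ∧
  (∀ e, NRe Fg R e → Disjoint (ψ e '' (H.verts \ {h₁, h₂})) (φ '' Fg.verts)) ∧
  (P.verts = φ '' Fg.verts ∪ ⋃ e ∈ {e | NRe Fg R e}, ψ e '' H.verts) ∧
  (∀ x y, P.Adj x y ↔
    ((∃ p q, Fg.Adj p q ∧ p ∈ R ∧ q ∈ R ∧ x = φ p ∧ y = φ q) ∨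
      ∃ e, NRe Fg R e ∧ ∃ p q, H.Adj p q ∧ x = ψ e p ∧ y = ψ e q))

/-- `P` is a copy of the product `(R,Fg) × (h₁h₂, H)` placed by `φ`. -/
def IsProdCopy (Fg : Sub W) (R : Set W) (H : Sub U) (h₁ h₂ : U) (P : Sub X) (φ : W → X) : Prop :=
  ∃ ψ, IsProdCopyData Fg R H h₁ h₂ P φ ψ

/-- `InF F u v k G a b` : the graph `G` rooted at `(a, b)` is (a copy of) a member of
the family `𝓕ᵏ` built from the graph `F` with distinguished edge `{u,v}`.
`𝓕¹` consists of a single edge rooted at its endpoints, and for `k ≥ 2`,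
`𝓕ᵏ = { ⊔_{1 ≤ i < k} (e,F)×(eᵢ,Fᵢ*) : Fᵢ* ∈ 𝓕^{≤i} }`, the parts being joined
at the common roots and otherwise disjoint. -/
inductive InF (F : Sub ℕ) (u v : ℕ) : ℕ → Sub ℕ → ℕ → ℕ → Prop
  | base (a b : ℕ) (G : Sub ℕ) (hab : a ≠ b) (hv : G.verts = {a, b})
      (he : G.edgeSet = {s(a, b)}) : InF F u v 1 G a b
  | step (k a b : ℕ) (P : ℕ → Sub ℕ) (G : Sub ℕ)
      (j : ℕ → ℕ) (Fi : ℕ → Sub ℕ) (c d : ℕ → ℕ) (φ : ℕ → ℕ → ℕ)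
      (hk : 2 ≤ k)
      (hj : ∀ i, 1 ≤ i → i < k → 1 ≤ j i ∧ j i ≤ i)
      (hrec : ∀ i, 1 ≤ i → i < k → InF F u v (j i) (Fi i) (c i) (d i))
      (hprod : ∀ i, 1 ≤ i → i < k →
        IsProdCopy F {u, v} (Fi i) (c i) (d i) (P i) (φ i) ∧
          ({φ i u, φ i v} : Set ℕ) = {a, b})
      (hdisj : ∀ i i', 1 ≤ i → i < k → 1 ≤ i' → i' < k → i ≠ i' →
        (P i).verts ∩ (P i').verts = {a, b})
      (hG : G = ⨆ i ∈ Set.Ico 1 k, P i) : InF F u v k G a b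

/-- membership in `𝓕^{≤ m} = ∪_{1 ≤ j ≤ m} 𝓕ʲ`. -/
def InFle (F : Sub ℕ) (u v : ℕ) (m : ℕ) (G : Sub ℕ) (a b : ℕ) : Prop :=
  ∃ j, 1 ≤ j ∧ j ≤ m ∧ InF F u v j G a b


/-! ### Partite graphs, regularity -/

/-- number of edges of a `SimpleGraph`. -/
def eCnt {V : Type*} (G : SimpleGraph V) : ℕ := G.edgeSet.ncard

/-- number of edges of `G` having all endpoints inside `R`, i.e. `e_{G[R]}`. -/
def eIn {V : Type*} (G : SimpleGraph V) (R : Finset V) : ℕ :=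
  {e ∈ G.edgeSet | ∀ x ∈ e, x ∈ R}.ncard

/-- `F₋`: the graph `F` with all edges inside the root set `R` removed. -/
def Fm {V : Type*} (F : SimpleGraph V) (R : Finset V) : SimpleGraph V :=
  F.deleteEdges {e | ∀ x ∈ e, x ∈ R}

/-- edge density of the bipartite pair `(s,t)` in `G`. -/
def bidensity {V : Type*} (G : SimpleGraph V) (s t : Finset V) : ℝ :=
  ({pq : V × V | pq.1 ∈ s ∧ pq.2 ∈ t ∧ G.Adj pq.1 pq.2}.ncard : ℝ) /
    ((s.card : ℝ) * (t.card : ℝ))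

/-- the pair `(s,t)` is `(ε)`-regular in `G`: for all `s' ⊆ s`, `t' ⊆ t` with
`|s'| ≥ ε|s|`, `|t'| ≥ ε|t|` the density deviates by at most `ε` times the density of the pair. -/
def EpsRegular {V : Type*} (G : SimpleGraph V) (ε : ℝ) (s t : Finset V) : Prop :=
  ∀ s' t' : Finset V, s' ⊆ s → t' ⊆ t → ε * s.card ≤ s'.card → ε * t.card ≤ t'.card →
    |bidensity G s' t' - bidensity G s t| ≤ ε * bidensity G s t

/-- the `i`-th vertex class `V_i` of the canonical `|ι|`-partite vertex set `ι × Fin n`. -/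
def prt (ι : Type*) [Fintype ι] (n : ℕ) (i : ι) : Finset (ι × Fin n) :=
  Finset.univ.filter fun pq => pq.1 = i

variable {ι : Type*} [Fintype ι]

/-- `G` is partite w.r.t. `Fm`: its edges run only between vertex classes
corresponding to edges of `Fm`. -/
def partiteOn (Fmg : SimpleGraph ι) (n : ℕ) (G : SimpleGraph (ι × Fin n)) : Prop :=
  ∀ x y, G.Adj x y → Fmg.Adj x.1 y.1

/-- number of edges of `G` between the classes `V_i` and `V_j`. -/
def ebp (n : ℕ) (G : SimpleGraph (ι × Fin n)) (i j : ι) : ℕ :=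
  {pq : (ι × Fin n) × (ι × Fin n) | pq.1.1 = i ∧ pq.2.1 = j ∧ G.Adj pq.1 pq.2}.ncard

/-- `G ∈ 𝓖(Fmg, n, m, ε)`: `G` is `Fmg`-partite, with exactly `m` edges between classes
joined by an edge of `Fmg`, all such pairs being `(ε)`-regular. -/
def inG (Fmg : SimpleGraph ι) (n m : ℕ) (ε : ℝ) (G : SimpleGraph (ι × Fin n)) : Prop :=
  partiteOn Fmg n G ∧
    ∀ i j, Fmg.Adj i j → ebp n G i j = m ∧ EpsRegular G ε (prt ι n i) (prt ι n j)

/-- `G_R` is `(F,q,ε)`-lower-regular. -/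
def LowerReg (F : SimpleGraph ι) (R : Finset ι) (n : ℕ) (GR : Finset ((↥R) → Fin n))
    (q ε : ℝ) : Prop :=
  ∀ Wf : (↥R) → Finset (Fin n), (∀ i, ε * n ≤ ((Wf i).card : ℝ)) →
    q ^ eIn F R * ∏ i, ((Wf i).card : ℝ) ≤ ((GR.filter fun e => ∀ i, e i ∈ Wf i).card : ℝ)

/-- `G_R` is `(F,q)`-upper-extensible. -/
def UpperExt (F : SimpleGraph ι) (R : Finset ι) (n : ℕ) (GR : Finset ((↥R) → Fin n))
    (q : ℝ) : Prop :=
  ∀ S : Finset ι, S ⊆ R → ∀ g : ι → Fin n,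
    ((GR.filter fun e => ∀ i : ↥R, (i : ι) ∈ S → e i = g (i : ι)).card : ℝ) ≤
      q ^ (eIn F R - eIn F S) * (n : ℝ) ^ (R.card - S.card)

/-- the number of edges, counted with multiplicity, of the multi-hypergraph `T(G, G_R)`:
for each `e ∈ G_R` the number of partite copies of `F₋` in `G` containing the vertices of `e`. -/
def Tcount (F : SimpleGraph ι) (R : Finset ι) (n : ℕ) (G : SimpleGraph (ι × Fin n))
    (GR : Finset ((↥R) → Fin n)) : ℕ :=
  ∑ e ∈ GR, {f : ι → Fin n |
      (∀ i j, (Fm F R).Adj i j → G.Adj (i, f i) (j, f j)) ∧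
      ∀ i : ↥R, f (i : ι) = e i}.ncard

/-! ### The hypergraph 𝓔(G_R, F) and its co-degree function -/

/-- the edge set of the partite copy of `Fmg` given by the transversal `f`. -/
def copyEdges (Fmg : SimpleGraph ι) {n : ℕ} (f : ι → Fin n) : Set (Sym2 (ι × Fin n)) :=
  Sym2.map (fun i => (i, f i)) '' Fmg.edgeSet

/-- the degree in `𝓔(G_R,F)` of a set `σ` of vertices (i.e. of edges of `K_{F₋,n}`):
the number of partite copies of `F₋` whose roots form an edge of `G_R` and whose
edge set contains `σ`. -/
def degI (F : SimpleGraph ι) (R : Finset ι) {n : ℕ} (GR : Finset ((↥R) → Fin n))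
    (σ : Finset (Sym2 (ι × Fin n))) : ℕ :=
  {pf : ((↥R) → Fin n) × (ι → Fin n) |
    pf.1 ∈ GR ∧ (∀ i : ↥R, pf.2 (i : ι) = pf.1 i) ∧ ↑σ ⊆ copyEdges (Fm F R) pf.2}.ncard

/-- `d^{(j)}(v)`: the maximal degree of a `j`-set containing `v`. -/
def djI (F : SimpleGraph ι) (R : Finset ι) {n : ℕ} (GR : Finset ((↥R) → Fin n))
    (jj : ℕ) (v : Sym2 (ι × Fin n)) : ℕ :=
  ⨆ σ : {σ : Finset (Sym2 (ι × Fin n)) // v ∈ σ ∧ σ.card = jj}, degI F R GR σ.1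

/-- the co-degree function `δ(𝓔(G_R,F), τ)` of Saxton–Thomason. -/
def codegFn (F : SimpleGraph ι) (R : Finset ι) {n : ℕ} (GR : Finset ((↥R) → Fin n))
    (τ : ℝ) : ℝ :=
  if (∑ v : Sym2 (ι × Fin n), degI F R GR {v}) = 0 then 0 else
    (2 : ℝ) ^ ((eCnt (Fm F R)).choose 2 - 1) *
      ∑ jj ∈ Finset.Icc 2 (eCnt (Fm F R)),
        ((∑ v : Sym2 (ι × Fin n), (djI F R GR jj v : ℝ)) /
            (τ ^ (jj - 1) * ∑ v : Sym2 (ι × Fin n), (degI F R GR {v} : ℝ))) *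
          ((2 : ℝ) ^ ((jj - 1).choose 2))⁻¹


/-! ### The online F-avoidance game -/

/-- the edges of the complete graph `K_n`. -/
abbrev En (n : ℕ) := {e : Sym2 (Fin n) // ¬ e.IsDiag}

/-- a (deterministic) Painter strategy: given the history of previously presented
edges together with their colors, and the newly presented edge, pick a color. -/
abbrev Strategy (n r : ℕ) := List (En n × Fin r) → En n → Fin r

/-- the history (presented edges with their colors, in order) after `N` rounds of
the game in which the edges arrive in the order `π` and Painter plays `σ`. -/
def histF {n r : ℕ} (σ : Strategy n r) (π : Fin (Nat.choose n 2) → En n) :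
    ℕ → List (En n × Fin r)
  | 0 => []
  | i + 1 =>
      histF σ π i ++
        if h : i < Nat.choose n 2 then
          [(π ⟨i, h⟩, σ (histF σ π i) (π ⟨i, h⟩))]
        else []

/-- the edge `e` occurs in the history `L` with color `c`. -/
def ListColored {n r : ℕ} (L : List (En n × Fin r)) (e : Sym2 (Fin n)) (c : Fin r) : Prop :=
  ∃ pr ∈ L, (pr.1 : Sym2 (Fin n)) = e ∧ pr.2 = c

/-- the graph of all edges of color `c` in the history `L`. -/
def colorGraphL {n r : ℕ} (L : List (En n × Fin r)) (c : Fin r) : SimpleGraph (Fin n) :=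
  SimpleGraph.fromEdgeSet {e | ListColored L e c}

/-- the graph of all presented edges in the history `L`. -/
def presentedGraphL {n r : ℕ} (L : List (En n × Fin r)) : SimpleGraph (Fin n) :=
  SimpleGraph.fromEdgeSet {e | ∃ c, ListColored L e c}

/-- the graph of edges colored `c` after `N` rounds. -/
def colorGraph {n r : ℕ} (σ : Strategy n r) (π : Fin (Nat.choose n 2) → En n) (N : ℕ)
    (c : Fin r) : SimpleGraph (Fin n) :=
  colorGraphL (histF σ π N) c

/-- the probability, under an edge ordering chosen uniformly at random among all
`(n choose 2)!` orderings of the edges of `K_n`, of the event `P`. -/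
def gameProb (n : ℕ) (P : (Fin (Nat.choose n 2) → En n) → Prop) : ℝ :=
  ({π : Fin (Nat.choose n 2) → En n | Function.Bijective π ∧ P π}.ncard : ℝ) /
    ({π : Fin (Nat.choose n 2) → En n | Function.Bijective π}.ncard : ℝ)

/-- some color class after `N` rounds contains a copy of the (finite) graph `F`. -/
def MonoCopy (F : Sub ℕ) {n r : ℕ} (σ : Strategy n r) (π : Fin (Nat.choose n 2) → En n)
    (N : ℕ) : Prop :=
  ∃ (c : Fin r) (φ : ℕ → Fin n), Set.InjOn φ F.verts ∧
    ∀ x y, F.Adj x y → (colorGraph σ π N c).Adj (φ x) (φ y)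

/-- Painter survives `N` rounds: after `N` edges have been presented and colored,
no color class contains a copy of `F`. -/
def Survive {α : Type*} (F : SimpleGraph α) {n r : ℕ} (σ : Strategy n r)
    (π : Fin (Nat.choose n 2) → En n) (N : ℕ) : Prop :=
  ∀ c : Fin r, ¬ ∃ φ : α ↪ Fin n, ∀ x y, F.Adj x y → (colorGraph σ π N c).Adj (φ x) (φ y)

/-! ### The binomial random graph -/

/-- probability of the event `P` for the binomial random graph `G(n,p)`. -/
def gnpProb (n : ℕ) (p : ℝ) (P : SimpleGraph (Fin n) → Prop) : ℝ :=
  ∑ G : SimpleGraph (Fin n),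
    if P G then p ^ eCnt G * (1 - p) ^ (Nat.choose n 2 - eCnt G) else 0

/-- the number of copies of the rooted graph `(ρ, G)` (with ordered roots `ρ`) spanned by
the tuple `f` in `Γ`: embeddings of `G - G[R]` carrying the roots `ρ` to `f` in order. -/
def spanCount {α : Type*} (G : SimpleGraph α) {k : ℕ} (ρ : Fin k ↪ α) {n : ℕ}
    (Γ : SimpleGraph (Fin n)) (f : Fin k ↪ Fin n) : ℕ :=
  {φ : α → Fin n | Function.Injective φ ∧ (∀ i, φ (ρ i) = f i) ∧
    ∀ x y, G.Adj x y → ¬(x ∈ Set.range ρ ∧ y ∈ Set.range ρ) → Γ.Adj (φ x) (φ y)}.ncard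

/-! ### F*-spanning subgraphs, upper uniformity -/

/-- `G` is an `F*`-spanning subgraph of `Γ` (where `F*` is rooted at `a, b`):
every edge of `G` is the root pair of a copy of `F*` in `Γ` whose non-root vertices
avoid `V(G)`, these copies being pairwise edge-disjoint. -/
def FStarSpanning {n : ℕ} (Fs : Sub ℕ) (a b : ℕ) (Γ : SimpleGraph (Fin n))
    (G : Sub (Fin n)) : Prop :=
  ∃ κ : Sym2 (Fin n) → ℕ → Fin n,
    (∀ e ∈ G.edgeSet, Set.InjOn (κ e) Fs.verts) ∧
    (∀ e ∈ G.edgeSet, ∀ x y : Fin n, e = s(x, y) →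
      ({κ e a, κ e b} : Set (Fin n)) = {x, y}) ∧
    (∀ e ∈ G.edgeSet, ∀ w ∈ Fs.verts, w ≠ a → w ≠ b → κ e w ∉ G.verts) ∧
    (∀ e ∈ G.edgeSet, ∀ w w', Fs.Adj w w' → Γ.Adj (κ e w) (κ e w')) ∧
    (∀ e ∈ G.edgeSet, ∀ e' ∈ G.edgeSet, e ≠ e' →
      Disjoint (Sym2.map (κ e) '' Fs.edgeSet) (Sym2.map (κ e') '' Fs.edgeSet))

/-- number of edges of `G` from `s` to `t`. -/
def eBetween {V : Type*} (G : Sub V) (s t : Set V) : ℕ :=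
  {pq : V × V | pq.1 ∈ s ∧ pq.2 ∈ t ∧ G.Adj pq.1 pq.2}.ncard

/-- `G` is `(η,q)`-upper-uniform. -/
def UpperUniform {V : Type*} (G : Sub V) (η q : ℝ) : Prop :=
  ∀ s t : Set V, s ⊆ G.verts → t ⊆ G.verts → Disjoint s t →
    η * (nverts G : ℝ) ≤ (s.ncard : ℝ) → η * (nverts G : ℝ) ≤ (t.ncard : ℝ) →
    (eBetween G s t : ℝ) ≤ (1 + η) * q * (s.ncard : ℝ) * (t.ncard : ℝ)

/-! ### Dangerous copies -/

/-- `col` is a dangerous `r`-coloring of `F*₋` for `F* ∈ 𝓕ᵏ` (rooted at `a,b`):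
for some decomposition of `F*` as in the construction of `𝓕ᵏ`, the `k-1` copies of
`F₋` whose roots were identified in the construction are monochromatic, with pairwise
different colors. -/
def DangerousColoring (F : Sub ℕ) (u v : ℕ) (k : ℕ) (Fs : Sub ℕ) (a b : ℕ) (r : ℕ)
    (col : Sym2 ℕ → Fin r) : Prop :=
  k = 1 ∨ ∃ (P : ℕ → Sub ℕ) (c : ℕ → Fin r),
    Fs = (⨆ i ∈ Set.Ico 1 k, P i) ∧
    (∀ i ∈ Set.Ico 1 k, ∀ i' ∈ Set.Ico 1 k, i ≠ i' →
      c i ≠ c i' ∧ (P i).verts ∩ (P i').verts = {a, b}) ∧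
    ∀ i ∈ Set.Ico 1 k, ∃ (j : ℕ) (Fi : Sub ℕ) (c' d' : ℕ) (φ : ℕ → ℕ),
      1 ≤ j ∧ j ≤ i ∧ InF F u v j Fi c' d' ∧
      IsProdCopy F {u, v} Fi c' d' (P i) φ ∧ ({φ u, φ v} : Set ℕ) = {a, b} ∧
      ∀ x y, F.Adj x y → ¬(x ∈ ({u, v} : Set ℕ) ∧ y ∈ ({u, v} : Set ℕ)) →
        col (s(φ x, φ y)) = c i

/-- `P` is a dangerous copy of `F × (e, F*₋)` in the colored graph after `N` rounds:
a copy of the product of `F` (all edges of `F` being used) with `F*₋` rooted at `(a,b)`,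
all of whose attached copies of `F*₋` are colored according to one and the same
dangerous coloring. -/
def IsDangerousCopy (F : Sub ℕ) (u v : ℕ) (r : ℕ) (Fs : Sub ℕ) (a b : ℕ) {n : ℕ}
    (σ : Strategy n r) (π : Fin (Nat.choose n 2) → En n) (N : ℕ) (P : Sub (Fin n)) : Prop :=
  ∃ (φ : ℕ → Fin n) (ψ : Sym2 ℕ → ℕ → Fin n) (col : Sym2 ℕ → Fin r),
    IsProdCopyData F ∅ (Fs.deleteEdges {s(a, b)}) a b P φ ψ ∧
    DangerousColoring F u v r Fs a b r col ∧
    ∀ e, NRe F ∅ e → ∀ x y, (Fs.deleteEdges {s(a, b)}).Adj x y →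
      ListColored (histF σ π N) (s(ψ e x, ψ e y)) (col (s(x, y)))

/-! ### The multi-phase game -/

/-- one phase of the multi-phase game: the edges of `K_n` are scanned in the order `π`;
those belonging to the phase graph `Gph` and not previously presented are presented to
Painter (playing `σ`), who colors them immediately. -/
def phaseStep {n r : ℕ} (σ : Strategy n r) (Gph : SimpleGraph (Fin n))
    (π : Fin (Nat.choose n 2) → En n) (init : List (En n × Fin r)) :
    ℕ → List (En n × Fin r)
  | 0 => init
  | jj + 1 =>
      let L := phaseStep σ Gph π init jj
      if h : jj < Nat.choose n 2 then
        if (((π ⟨jj, h⟩ : En n) : Sym2 (Fin n)) ∈ Gph.edgeSet ∧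
            ∀ pr ∈ L, pr.1 ≠ π ⟨jj, h⟩) then
          L ++ [(π ⟨jj, h⟩, σ L (π ⟨jj, h⟩))]
        else L
      else L

/-- the history after the first `i` phases of the multi-phase game with phase graphs `Gs`
and phase edge-orderings `πs`. -/
def multiHist {n r k : ℕ} (σ : Strategy n r) (Gs : Fin k → SimpleGraph (Fin n))
    (πs : Fin k → Fin (Nat.choose n 2) → En n) : ℕ → List (En n × Fin r)
  | 0 => []
  | i + 1 =>
      if h : i < k then
        phaseStep σ (Gs ⟨i, h⟩) (πs ⟨i, h⟩) (multiHist σ Gs πs i) (Nat.choose n 2)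
      else multiHist σ Gs πs i

/-- probability of the event `P` when `k` independent copies of `G(n,p)` are sampled,
each with an independent uniformly random ordering of the edges of `K_n`. -/
def phasesProb (n k : ℕ) (p : ℝ)
    (P : (Fin k → SimpleGraph (Fin n)) → (Fin k → Fin (Nat.choose n 2) → En n) → Prop) : ℝ :=
  (∑ Gs : Fin k → SimpleGraph (Fin n), ∑ πs : Fin k → Fin (Nat.choose n 2) → En n,
      if (∀ i, Function.Bijective (πs i)) ∧ P Gs πs then
        ∏ i, p ^ eCnt (Gs i) * (1 - p) ^ (Nat.choose n 2 - eCnt (Gs i))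
      else 0) /
    ({π : Fin (Nat.choose n 2) → En n | Function.Bijective π}.ncard : ℝ) ^ k

/-- witness data for Lemma `force regular`: a `t`-partite graph `G` with classes `parts`
of size `nn`, `m` edges between classes, monochromatic in color `col`, which is
`F*`-spanning for the member `(Fs, a, b)` of `𝓕^{≤|S|+1}`. -/
structure Wit (n r t : ℕ) where
  parts : Fin t → Finset (Fin n)
  G : Sub (Fin n)
  col : Fin r
  nn : ℕ
  m : ℕ
  Fs : Sub ℕ
  a : ℕ
  b : ℕ

/-- validity of a witness for Lemma `force regular` (see `Wit`). -/
def WitValid (F : Sub ℕ) (u v : ℕ) {n r t k : ℕ} (S : Finset (Fin r)) (ε η pn : ℝ)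
    (σ : Strategy n r) (Gs : Fin k → SimpleGraph (Fin n))
    (πs : Fin k → Fin (Nat.choose n 2) → En n) (w : Wit n r t) : Prop :=
  w.col ∉ S ∧
  (∃ jj : ℕ, 1 ≤ jj ∧ jj ≤ S.card + 1 ∧ InF F u v jj w.Fs w.a w.b) ∧
  η * (n : ℝ) ≤ (w.nn : ℝ) ∧
  η * (n : ℝ) ^ nverts w.Fs * pn ^ nedges w.Fs ≤ (w.m : ℝ) ∧
  (∀ i, (w.parts i).card = w.nn) ∧
  (∀ i i', i ≠ i' → Disjoint (w.parts i) (w.parts i')) ∧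
  (∀ x y, w.G.Adj x y → ∃ i i', i ≠ i' ∧ x ∈ w.parts i ∧ y ∈ w.parts i') ∧
  (∀ i i', i ≠ i' → eBetween w.G (↑(w.parts i)) (↑(w.parts i')) = w.m ∧
      EpsRegular w.G.spanningCoe ε (w.parts i) (w.parts i')) ∧
  w.G.verts = ⋃ i, ↑(w.parts i) ∧
  (∀ x y, w.G.Adj x y → ListColored (multiHist σ Gs πs k) (s(x, y)) w.col) ∧
  FStarSpanning w.Fs w.a w.b (presentedGraphL (multiHist σ Gs πs k)) w.G

/-- an equitable partition of `Fin n` into `rr` classes. -/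
def Equitable {n rr : ℕ} (P : Fin n → Fin rr) : Prop :=
  ∀ x y : Fin rr, (P ⁻¹' {x}).ncard ≤ (P ⁻¹' {y}).ncard + 1

/-- edges of the simple graph `C` between `s` and `t`. -/
def eBetweenS {V : Type*} (C : SimpleGraph V) (s t : Set V) : ℕ :=
  {pq : V × V | pq.1 ∈ s ∧ pq.2 ∈ t ∧ C.Adj pq.1 pq.2}.ncard

/-! ### Auxiliary lemmas for Statement 16 -/

section Aux16

lemma natSup_le_nat {κ : Type*} [Finite κ] (f : κ → ℕ) {B : ℕ}
    (h : ∀ i, f i ≤ B) : (⨆ i, f i) ≤ B := by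
  cases isEmpty_or_nonempty κ with
  | inl hk => simp [ciSup_of_empty]
  | inr hk => exact ciSup_le h

lemma natSup_cast_le {κ : Type*} [Finite κ] (f : κ → ℕ) {B : ℝ}
    (hB : 0 ≤ B) (h : ∀ i, (f i : ℝ) ≤ B) : ((⨆ i, f i : ℕ) : ℝ) ≤ B := by
  have h1 : (⨆ i, f i) ≤ ⌊B⌋₊ := natSup_le_nat f fun i => Nat.le_floor (h i)
  calc ((⨆ i, f i : ℕ) : ℝ) ≤ (⌊B⌋₊ : ℝ) := by exact_mod_cast h1
    _ ≤ B := Nat.floor_le hB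

lemma natSup_ne_zero {κ : Type*} [Finite κ] (f : κ → ℕ)
    (h : (⨆ i, f i) ≠ 0) : ∃ i, f i ≠ 0 := by
  by_contra hc
  push_neg at hc
  apply h
  cases isEmpty_or_nonempty κ with
  | inl hk => simp [ciSup_of_empty]
  | inr hk => simp [hc]

variable {ι : Type} [Fintype ι]

lemma degI_mono (F : SimpleGraph ι) (R : Finset ι) {n : ℕ} (GR : Finset ((↥R) → Fin n))
    {σ σ' : Finset (Sym2 (ι × Fin n))} (h : σ ⊆ σ') :
    degI F R GR σ' ≤ degI F R GR σ := by
  apply Set.ncard_le_ncard _ (Set.toFinite _)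
  rintro pf ⟨h1, h2, h3⟩
  exact ⟨h1, h2, fun e he => h3 (Finset.coe_subset.mpr h he)⟩

lemma copyEdges_ncard (Fmg : SimpleGraph ι) {n : ℕ} (f : ι → Fin n) :
    (copyEdges Fmg f).ncard = eCnt Fmg := by
  unfold copyEdges eCnt
  exact Set.ncard_image_of_injective _ (Sym2.map.injective fun a b hab => congrArg Prod.fst hab)

lemma filter_mem_card_eq_ncard {α : Type*} [Fintype α] (s : Set α)
    [DecidablePred (· ∈ s)] :
    (Finset.univ.filter fun x => x ∈ s).card = s.ncard := by
  classical
  rw [Set.ncard_eq_toFinset_card']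
  apply Finset.card_bij (fun a _ => a) <;> simp

lemma sum_degI_singleton (F : SimpleGraph ι) (R : Finset ι) {n : ℕ}
    (GR : Finset ((↥R) → Fin n)) :
    ∑ v : Sym2 (ι × Fin n), degI F R GR {v}
      = (Finset.univ.filter fun pf : ((↥R) → Fin n) × (ι → Fin n) =>
          pf.1 ∈ GR ∧ ∀ i : ↥R, pf.2 ↑i = pf.1 i).card * eCnt (Fm F R) := by
  have hdeg : ∀ v : Sym2 (ι × Fin n), degI F R GR {v}
      = (Finset.univ.filter fun pf : ((↥R) → Fin n) × (ι → Fin n) =>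
          (pf.1 ∈ GR ∧ ∀ i : ↥R, pf.2 ↑i = pf.1 i) ∧
            v ∈ copyEdges (Fm F R) pf.2).card := by
    intro v
    unfold degI
    rw [← filter_mem_card_eq_ncard]
    congr 1
    ext pf
    simp [and_assoc]
  rw [Finset.sum_congr rfl fun v _ => hdeg v]
  simp_rw [Finset.card_filter]
  rw [Finset.sum_comm]
  have hinner : ∀ pf : ((↥R) → Fin n) × (ι → Fin n),
      (∑ v : Sym2 (ι × Fin n), if (pf.1 ∈ GR ∧ ∀ i : ↥R, pf.2 ↑i = pf.1 i) ∧
          v ∈ copyEdges (Fm F R) pf.2 then 1 else 0)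
        = if pf.1 ∈ GR ∧ ∀ i : ↥R, pf.2 ↑i = pf.1 i then eCnt (Fm F R) else 0 := by
    intro pf
    by_cases hA : pf.1 ∈ GR ∧ ∀ i : ↥R, pf.2 ↑i = pf.1 i
    · have hiff : ∀ v : Sym2 (ι × Fin n),
          ((pf.1 ∈ GR ∧ ∀ i : ↥R, pf.2 ↑i = pf.1 i) ∧ v ∈ copyEdges (Fm F R) pf.2)
            = (v ∈ copyEdges (Fm F R) pf.2) := fun v => by
        rw [eq_iff_iff]; exact ⟨fun h => h.2, fun h => ⟨hA, h⟩⟩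
      simp_rw [hiff]
      rw [if_pos hA, ← Finset.card_filter, filter_mem_card_eq_ncard, copyEdges_ncard]
    · rw [if_neg hA]
      apply Finset.sum_eq_zero
      intro v _
      rw [if_neg]
      exact fun h => hA h.1
  rw [Finset.sum_congr rfl fun pf _ => hinner pf, ← Finset.sum_filter,
    Finset.sum_const, smul_eq_mul, Finset.card_filter]

lemma pairs_card_ge (F : SimpleGraph ι) (R : Finset ι) {n : ℕ}
    (GR : Finset ((↥R) → Fin n)) :
    GR.card * n ^ (Fintype.card ι - R.card)
      ≤ (Finset.univ.filter fun pf : ((↥R) → Fin n) × (ι → Fin n) =>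
          pf.1 ∈ GR ∧ ∀ i : ↥R, pf.2 ↑i = pf.1 i).card := by
  have hcard : (GR ×ˢ (Finset.univ : Finset ({i : ι // ¬ i ∈ R} → Fin n))).card
      = GR.card * n ^ (Fintype.card ι - R.card) := by
    rw [Finset.card_product, Finset.card_univ]
    congr 1
    rw [Fintype.card_fun, Fintype.card_fin, Fintype.card_subtype_compl, Fintype.card_coe]
  rw [← hcard]
  apply Finset.card_le_card_of_injOn
      (fun eg => (eg.1, fun i => if h : i ∈ R then eg.1 ⟨i, h⟩ else eg.2 ⟨i, h⟩))
  · rintro ⟨e, g⟩ hmem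
    rw [Finset.mem_coe, Finset.mem_product] at hmem
    simp only [Finset.mem_coe, Finset.mem_filter, Finset.mem_univ, true_and]
    exact ⟨hmem.1, fun i => by simp [i.2]⟩
  · rintro ⟨e, g⟩ h1 ⟨e', g'⟩ h2 heq
    simp only [Prod.mk.injEq] at heq
    obtain ⟨he, hf⟩ := heq
    refine Prod.ext he (funext fun i => ?_)
    have := congrFun hf (↑i : ι)
    simp only [dif_neg i.2] at this
    simpa using this

lemma copyEdges_fst {n : ℕ} (Fmg : SimpleGraph ι) (f : ι → Fin n) {v : Sym2 (ι × Fin n)}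
    (h : v ∈ copyEdges Fmg f) : Sym2.map Prod.fst v ∈ Fmg.edgeSet := by
  obtain ⟨w, hw, rfl⟩ := h
  rw [Sym2.map_map]
  have h2 : (Prod.fst ∘ fun i => (i, f i)) = id := rfl
  rw [h2, Sym2.map_id]
  exact hw

lemma support_card_le (F : SimpleGraph ι) (R : Finset ι) {n : ℕ}
    (GR : Finset ((↥R) → Fin n)) (hn : 0 < n) :
    (Finset.univ.filter fun v : Sym2 (ι × Fin n) => degI F R GR {v} ≠ 0).card
      ≤ eCnt (Fm F R) * n ^ 2 := by
  classical
  haveI : Inhabited (Fin n) := ⟨⟨0, hn⟩⟩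
  have htar : ((Finset.univ.filter fun w : Sym2 ι => w ∈ (Fm F R).edgeSet) ×ˢ
      (Finset.univ : Finset (Fin n × Fin n))).card = eCnt (Fm F R) * n ^ 2 := by
    rw [Finset.card_product, filter_mem_card_eq_ncard, Finset.card_univ]
    congr 1
    rw [Fintype.card_prod, Fintype.card_fin]
    ring
  rw [← htar]
  have hedge : ∀ v ∈ (Finset.univ.filter fun v : Sym2 (ι × Fin n) => degI F R GR {v} ≠ 0),
      Sym2.map Prod.fst v ∈ (Fm F R).edgeSet := by
    intro v hv
    rw [Finset.mem_filter] at hv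
    obtain ⟨pf, hpf⟩ := Set.nonempty_of_ncard_ne_zero hv.2
    exact copyEdges_fst _ _ (hpf.2.2 (by simp))
  set sel : Sym2 (ι × Fin n) → ι → Fin n := fun v i =>
    if h : ∃ p, p ∈ v ∧ p.1 = i then (Classical.choose h).2 else default with hseldef
  have hsel : ∀ (v : Sym2 (ι × Fin n)) (i : ι), i ∈ Sym2.map Prod.fst v →
      (i, sel v i) ∈ v := by
    intro v i hi
    rw [Sym2.mem_map] at hi
    obtain ⟨p, hp, hpi⟩ := hi
    have h : ∃ p, p ∈ v ∧ p.1 = i := ⟨p, hp, hpi⟩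
    simp only [hseldef, dif_pos h]
    have heq : (i, (Classical.choose h).2) = Classical.choose h :=
      Prod.ext_iff.mpr ⟨(Classical.choose_spec h).2.symm, rfl⟩
    rw [heq]
    exact (Classical.choose_spec h).1
  have hrec : ∀ v ∈ (Finset.univ.filter fun v : Sym2 (ι × Fin n) => degI F R GR {v} ≠ 0),
      v = s(((Sym2.map Prod.fst v).out.1, sel v (Sym2.map Prod.fst v).out.1),
            ((Sym2.map Prod.fst v).out.2, sel v (Sym2.map Prod.fst v).out.2)) := by
    intro v hv
    have hw := hedge v hv
    have hnd : ¬ (Sym2.map Prod.fst v).IsDiag :=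
      SimpleGraph.not_isDiag_of_mem_edgeSet _ hw
    have hne : (Sym2.map Prod.fst v).out.1 ≠ (Sym2.map Prod.fst v).out.2 := by
      intro hcontra
      apply hnd
      have hw2 : Sym2.map Prod.fst v
          = s((Sym2.map Prod.fst v).out.1, (Sym2.map Prod.fst v).out.2) := by
        conv_lhs => rw [← Quot.out_eq (Sym2.map Prod.fst v)]
      rw [hw2, Sym2.mk_isDiag_iff]
      exact hcontra
    have h1 := hsel v _ (Sym2.out_fst_mem (Sym2.map Prod.fst v))
    have h2 := hsel v _ (Sym2.out_snd_mem (Sym2.map Prod.fst v))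
    have hne2 : ((Sym2.map Prod.fst v).out.1, sel v (Sym2.map Prod.fst v).out.1)
        ≠ ((Sym2.map Prod.fst v).out.2, sel v (Sym2.map Prod.fst v).out.2) :=
      fun hc => hne (congrArg Prod.fst hc)
    exact ((Sym2.mem_and_mem_iff hne2).mp ⟨h1, h2⟩)
  apply Finset.card_le_card_of_injOn (fun v => (Sym2.map Prod.fst v,
    (sel v (Sym2.map Prod.fst v).out.1, sel v (Sym2.map Prod.fst v).out.2)))
  · intro v hv
    simp only [Finset.mem_coe, Finset.mem_product, Finset.mem_filter, Finset.mem_univ, true_and]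
    exact ⟨hedge v hv, trivial⟩
  · intro v hv v' hv' heq
    simp only [Prod.mk.injEq] at heq
    obtain ⟨hW, hx, hy⟩ := heq
    rw [hrec v hv, hrec v' hv', hx, hy, hW]

lemma card_arith {α : Type*} [Fintype α] (R T : Finset α) :
    (R.card - (R ∩ T).card) + (Fintype.card α - (R ∪ T).card)
      = Fintype.card α - T.card := by
  have h1 := Finset.card_union_add_card_inter R T
  have h2 : (R ∩ T).card ≤ R.card := Finset.card_le_card Finset.inter_subset_left
  have h3 : (R ∪ T).card ≤ Fintype.card α := Finset.card_le_univ _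
  have h4 : T.card ≤ Fintype.card α := Finset.card_le_univ _
  omega

lemma key_degI_bound (F : SimpleGraph ι) (R : Finset ι) {n : ℕ}
    (GR : Finset ((↥R) → Fin n))
    {A qn : ℝ} (hA : 1 ≤ A) (hq0 : 0 < qn) (hq1 : qn ≤ 1) (hn : 2 ≤ n)
    (hUE : UpperExt F R n GR (A * qn))
    (hm2 : m2t (↑R : Set ι) (toSub F) (-Real.logb n qn) ≠ ⊤)
    {jj : ℕ} (hjj : 2 ≤ jj) {σ : Finset (Sym2 (ι × Fin n))} (hσ : σ.card = jj) :
    (degI F R GR σ : ℝ) ≤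
      (n : ℝ) ^ (-(((m2t (↑R : Set ι) (toSub F) (-Real.logb n qn)).toReal⁻¹)
          * ((jj : ℝ) - 1)))
        * (n : ℝ) ^ (Fintype.card ι - 2 : ℕ) * (A * qn) ^ eIn F R := by
  classical
  have hn0 : (0:ℝ) < n := by positivity
  have hn1 : (1:ℝ) < n := by exact_mod_cast hn
  have hAq0 : (0:ℝ) < A * qn := by positivity
  set t : ℝ := -Real.logb n qn with ht
  set M : ℝ≥0∞ := m2t (↑R : Set ι) (toSub F) t with hM
  clear_value t M
  have ht0 : 0 ≤ t := by
    rw [ht, neg_nonneg]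
    exact Real.logb_nonpos hn1 hq0.le hq1
  have hne1 : (n:ℝ) ≠ 1 := by linarith
  have hqn : qn = (n:ℝ) ^ (-t) := by
    rw [ht, neg_neg]
    exact (Real.rpow_logb hn0 hne1 hq0).symm
  by_cases hdeg : degI F R GR σ = 0
  · rw [hdeg]
    push_cast
    positivity
  -- fix a pair realizing degI σ ≠ 0
  obtain ⟨pf₀, hpf₀⟩ := Set.nonempty_of_ncard_ne_zero hdeg
  obtain ⟨hpf₀GR, hpf₀ext, hσsub⟩ := hpf₀
  set f : ι → Fin n := pf₀.2 with hf
  -- projected edge set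
  set σ₀ : Finset (Sym2 ι) := σ.image (Sym2.map Prod.fst) with hσ₀
  have hσ₀Fm : ∀ w ∈ σ₀, w ∈ (Fm F R).edgeSet := by
    intro w hw
    obtain ⟨v, hvσ, rfl⟩ := Finset.mem_image.mp hw
    exact copyEdges_fst _ _ (hσsub (Finset.mem_coe.mpr hvσ))
  have hback : ∀ v ∈ σ, Sym2.map (fun i => (i, f i)) (Sym2.map Prod.fst v) = v := by
    intro v hv
    obtain ⟨w, hw, rfl⟩ := hσsub (Finset.mem_coe.mpr hv)
    rw [Sym2.map_map, Sym2.map_map]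
    rfl
  have hσ₀card : σ₀.card = jj := by
    rw [hσ₀, ← hσ]
    apply Finset.card_image_of_injOn
    intro v hv v' hv' h
    rw [← hback v hv, h, hback v' hv']
  set T₀ : Finset ι := Finset.univ.filter (fun i => ∃ w ∈ σ₀, i ∈ w) with hT₀
  set S : Finset ι := R ∩ T₀ with hS
  have hSR : S ⊆ R := Finset.inter_subset_left
  -- determination of f on T₀
  have hdet : ∀ f' : ι → Fin n, (↑σ : Set (Sym2 (ι × Fin n))) ⊆ copyEdges (Fm F R) f' →
      ∀ i ∈ T₀, f' i = f i := by
    intro f' hf' i hi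
    obtain ⟨w, hwσ₀, hiw⟩ := (Finset.mem_filter.mp hi).2
    obtain ⟨v, hvσ, hvw⟩ := Finset.mem_image.mp hwσ₀
    rw [← hvw, Sym2.mem_map] at hiw
    obtain ⟨p, hpv, hpi⟩ := hiw
    have h1 : p.2 = f p.1 := by
      obtain ⟨w', _, hw'⟩ := hσsub (Finset.mem_coe.mpr hvσ)
      rw [← hw', Sym2.mem_map] at hpv
      obtain ⟨a, _, ha⟩ := hpv
      rw [← ha]
    have h2 : p.2 = f' p.1 := by
      obtain ⟨w', _, hw'⟩ := hf' (Finset.mem_coe.mpr hvσ)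
      have hpv' := hpv
      rw [← hw', Sym2.mem_map] at hpv'
      obtain ⟨a, _, ha⟩ := hpv'
      rw [← ha]
    rw [← hpi, ← h1, h2]
  -- counting: degI σ ≤ (extensions on S of f in GR) * n ^ (free coordinates)
  have hcount : degI F R GR σ ≤
      (GR.filter fun e => ∀ i : ↥R, (i : ι) ∈ S → e i = f (i : ι)).card
        * n ^ (Fintype.card ι - (R ∪ T₀).card) := by
    have hre : degI F R GR σ = (Finset.univ.filter
        (fun pf : ((↥R) → Fin n) × (ι → Fin n) => pf ∈
          {pf : ((↥R) → Fin n) × (ι → Fin n) | pf.1 ∈ GR ∧ (∀ i : ↥R, pf.2 ↑i = pf.1 i) ∧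
            (↑σ : Set (Sym2 (ι × Fin n))) ⊆ copyEdges (Fm F R) pf.2})).card := by
      rw [filter_mem_card_eq_ncard]
      rfl
    rw [hre]
    have htar : ((GR.filter fun e => ∀ i : ↥R, (i : ι) ∈ S → e i = f (i : ι)) ×ˢ
        (Finset.univ : Finset ({i : ι // ¬ i ∈ R ∪ T₀} → Fin n))).card
          = (GR.filter fun e => ∀ i : ↥R, (i : ι) ∈ S → e i = f (i : ι)).card
            * n ^ (Fintype.card ι - (R ∪ T₀).card) := by
      rw [Finset.card_product, Finset.card_univ, Fintype.card_fun, Fintype.card_fin,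
        Fintype.card_subtype_compl, Fintype.card_coe]
    rw [← htar]
    apply Finset.card_le_card_of_injOn
        (fun pf => (pf.1, fun i : {i : ι // ¬ i ∈ R ∪ T₀} => pf.2 ↑i))
    · intro pf hpf
      rw [Finset.mem_coe, Finset.mem_filter] at hpf
      obtain ⟨-, hGR', hext', hsub'⟩ := hpf
      simp only [Finset.mem_coe, Finset.mem_product, Finset.mem_filter, Finset.mem_univ, and_true]
      refine ⟨hGR', fun i hiS => ?_⟩
      rw [← hext' i]
      exact hdet pf.2 hsub' ↑i (Finset.mem_of_mem_inter_right (hS ▸ hiS))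
    · intro pf hpf pf' hpf' heq
      rw [Finset.mem_coe, Finset.mem_filter] at hpf hpf'
      obtain ⟨-, hGR1, hext1, hsub1⟩ := hpf
      obtain ⟨-, hGR2, hext2, hsub2⟩ := hpf'
      simp only [Prod.mk.injEq] at heq
      obtain ⟨he, hrest⟩ := heq
      refine Prod.ext_iff.mpr ⟨he, funext fun i => ?_⟩
      by_cases hiR : i ∈ R
      · rw [hext1 ⟨i, hiR⟩, hext2 ⟨i, hiR⟩, he]
      · by_cases hiT : i ∈ T₀
        · rw [hdet pf.2 hsub1 i hiT, hdet pf'.2 hsub2 i hiT]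
        · have hiU : ¬ i ∈ R ∪ T₀ := by
            rw [Finset.mem_union]
            tauto
          exact congrFun hrest ⟨i, hiU⟩
  -- build the auxiliary rooted subgraph H'
  set H' : Sub ι := {
    verts := ↑T₀
    Adj := fun x y => s(x, y) ∈ σ₀ ∨ (F.Adj x y ∧ x ∈ S ∧ y ∈ S)
    adj_sub := by
      intro x y h
      rw [SimpleGraph.top_adj]
      rcases h with h | h
      · intro hxy
        exact SimpleGraph.not_isDiag_of_mem_edgeSet _ (hσ₀Fm _ h)
          (by rw [Sym2.mk_isDiag_iff]; exact hxy)
      · exact h.1.ne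
    edge_vert := by
      intro x y h
      rcases h with h | h
      · exact Finset.mem_coe.mpr (Finset.mem_filter.mpr ⟨Finset.mem_univ x,
          ⟨s(x, y), h, Sym2.mem_mk_left x y⟩⟩)
      · exact Finset.mem_coe.mpr (Finset.mem_of_mem_inter_right (hS ▸ h.2.1))
    symm := by
      refine ⟨fun x y h => ?_⟩
      rcases h with h | h
      · left; rwa [Sym2.eq_swap]
      · right; exact ⟨h.1.symm, h.2.2, h.2.1⟩ } with hH'
  have hH'le : H' ≤ toSub F := by
    constructor
    · exact Set.subset_univ _
    · intro x y h
      rcases h with h | h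
      · have := hσ₀Fm _ h
        rw [Fm, SimpleGraph.edgeSet_deleteEdges] at this
        exact this.1
      · exact h.1
  have hσ₀H' : (↑σ₀ : Set (Sym2 ι)) ⊆ H'.edgeSet := by
    intro w hw
    induction w with
    | _ x y =>
      rw [SimpleGraph.Subgraph.mem_edgeSet]
      exact Or.inl (Finset.mem_coe.mp hw)
  have hσ₀nR : ∀ w ∈ σ₀, ¬ (∀ x ∈ w, x ∈ (↑R : Set ι)) := by
    intro w hw hcon
    have := hσ₀Fm w hw
    rw [Fm, SimpleGraph.edgeSet_deleteEdges] at this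
    exact this.2 (fun x hx => Finset.mem_coe.mp (hcon x hx))
  have hedges : rInEdges (↑R : Set ι) H' + jj ≤ nedges H' := by
    have hdisj : Disjoint {e ∈ H'.edgeSet | ∀ x ∈ e, x ∈ (↑R : Set ι)}
        (↑σ₀ : Set (Sym2 ι)) := by
      rw [Set.disjoint_left]
      rintro e ⟨-, h2⟩ hc
      exact hσ₀nR e (Finset.mem_coe.mp hc) h2
    have hsub2 : {e ∈ H'.edgeSet | ∀ x ∈ e, x ∈ (↑R : Set ι)} ∪ (↑σ₀ : Set (Sym2 ι))
        ⊆ H'.edgeSet := Set.union_subset (fun e he => he.1) hσ₀H'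
    calc rInEdges (↑R : Set ι) H' + jj
        = {e ∈ H'.edgeSet | ∀ x ∈ e, x ∈ (↑R : Set ι)}.ncard + (↑σ₀ : Set (Sym2 ι)).ncard := by
          rw [rInEdges, Set.ncard_coe_finset, hσ₀card]
      _ = ({e ∈ H'.edgeSet | ∀ x ∈ e, x ∈ (↑R : Set ι)} ∪ (↑σ₀ : Set (Sym2 ι))).ncard :=
          (Set.ncard_union_eq hdisj (Set.toFinite _) (Set.toFinite _)).symm
      _ ≤ nedges H' := Set.ncard_le_ncard hsub2 (Set.toFinite _)
  have hrIn : (eIn F S : ℝ) ≤ (rInEdges (↑R : Set ι) H' : ℝ) := by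
    have : eIn F S ≤ rInEdges (↑R : Set ι) H' := by
      apply Set.ncard_le_ncard _ (Set.toFinite _)
      rintro e ⟨heF, heS⟩
      refine ⟨?_, fun x hx => Finset.mem_coe.mpr (hSR (heS x hx))⟩
      induction e with
      | _ x y =>
        rw [SimpleGraph.Subgraph.mem_edgeSet]
        exact Or.inr ⟨(SimpleGraph.mem_edgeSet F).mp heF,
          heS x (Sym2.mem_mk_left x y), heS y (Sym2.mem_mk_right x y)⟩
    exact_mod_cast this
  have hvertsH' : nverts H' = T₀.card := by
    rw [nverts, hH']
    exact Set.ncard_coe_finset _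
  clear_value H'
  -- use the definition of m₂ to control the exponent
  have hcard2 : rInEdges (↑R : Set ι) H' + 2 ≤ nedges H' :=
    le_trans (Nat.add_le_add_left hjj _) hedges
  have hval : d2t (↑R : Set ι) H' (t) ≤ M := by
    rw [hM]
    exact le_iSup (fun H : {H : Sub ι // H ≤ toSub F ∧
        rInEdges (↑R : Set ι) H + 2 ≤ nedges H} => d2t (↑R : Set ι) H.1 t)
      ⟨H', hH'le, hcard2⟩
  have hcond : 0 < (nverts H' : ℝ) - 2 - t * (rInEdges (↑R : Set ι) H' : ℝ) := by
    by_contra hc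
    rw [d2t, if_neg hc] at hval
    exact hm2 (top_le_iff.mp hval)
  have hval2 : (((nedges H' : ℝ) - (rInEdges (↑R : Set ι) H' : ℝ)) - 1)
      / ((nverts H' : ℝ) - 2 - t * (rInEdges (↑R : Set ι) H' : ℝ)) ≤ M.toReal := by
    rw [d2t, if_pos hcond] at hval
    exact (ENNReal.ofReal_le_iff_le_toReal hm2).mp hval
  have hnum : (jj : ℝ) - 1 ≤ ((nedges H' : ℝ) - (rInEdges (↑R : Set ι) H' : ℝ)) - 1 := by
    have : (rInEdges (↑R : Set ι) H' : ℝ) + jj ≤ (nedges H' : ℝ) := by exact_mod_cast hedges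
    linarith
  have hMpos : 0 < M.toReal := by
    by_contra hc
    push_neg at hc
    have h1 : 0 < (((nedges H' : ℝ) - (rInEdges (↑R : Set ι) H' : ℝ)) - 1)
        / ((nverts H' : ℝ) - 2 - t * (rInEdges (↑R : Set ι) H' : ℝ)) := by
      apply div_pos _ hcond
      have : (1:ℝ) ≤ (jj:ℝ) - 1 := by
        have : (2:ℝ) ≤ (jj:ℝ) := by exact_mod_cast hjj
        linarith
      linarith [hnum]
    linarith [hval2]
  have hkey : M.toReal⁻¹ * ((jj:ℝ) - 1) ≤ (T₀.card : ℝ) - 2 - t * (eIn F S : ℝ) := by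
    have h1 : ((nedges H' : ℝ) - (rInEdges (↑R : Set ι) H' : ℝ)) - 1
        ≤ M.toReal * ((nverts H' : ℝ) - 2 - t * (rInEdges (↑R : Set ι) H' : ℝ)) :=
      (div_le_iff₀ hcond).mp hval2
    have h2 : M.toReal⁻¹ * ((jj:ℝ) - 1)
        ≤ (nverts H' : ℝ) - 2 - t * (rInEdges (↑R : Set ι) H' : ℝ) := by
      rw [inv_mul_le_iff₀ hMpos]
      linarith [hnum]
    have h3 : t * (eIn F S : ℝ) ≤ t * (rInEdges (↑R : Set ι) H' : ℝ) :=
      mul_le_mul_of_nonneg_left hrIn ht0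
    rw [hvertsH'] at h2
    linarith
  -- cardinalities
  have hT₀3 : 2 < (T₀.card : ℝ) := by
    rw [hvertsH'] at hcond
    nlinarith [mul_nonneg ht0 (Nat.cast_nonneg (rInEdges (↑R : Set ι) H'))]
  have hT₀u : T₀.card ≤ Fintype.card ι := Finset.card_le_univ _
  have hT₀3' : 3 ≤ T₀.card := by
    by_contra hc
    push_neg at hc
    have h9 : (T₀.card : ℝ) ≤ 2 := by exact_mod_cast Nat.lt_succ_iff.mp hc
    linarith
  have hcards : (R.card - S.card) + (Fintype.card ι - (R ∪ T₀).card)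
      = Fintype.card ι - T₀.card := by
    rw [hS]
    exact card_arith R T₀
  -- apply upper-extensibility
  have hUE' := hUE S hSR (fun i => f i)
  have hcast : (degI F R GR σ : ℝ) ≤
      ((A * qn) ^ (eIn F R - eIn F S) * (n:ℝ) ^ (R.card - S.card))
        * (n:ℝ) ^ (Fintype.card ι - (R ∪ T₀).card) := by
    calc (degI F R GR σ : ℝ)
        ≤ ((GR.filter fun e => ∀ i : ↥R, (i : ι) ∈ S → e i = f (i : ι)).card : ℝ)
            * (n:ℝ) ^ (Fintype.card ι - (R ∪ T₀).card) := by
          have := hcount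
          push_cast
          exact_mod_cast Nat.cast_le.mpr hcount
      _ ≤ _ := by
          apply mul_le_mul_of_nonneg_right _ (by positivity)
          exact hUE'
  -- monotonicity of eIn
  have heIn : eIn F S ≤ eIn F R := by
    apply Set.ncard_le_ncard _ (Set.toFinite _)
    rintro e ⟨h1, h2⟩
    exact ⟨h1, fun x hx => hSR (h2 x hx)⟩
  -- final numeric computation
  have hfinal : ((A * qn) ^ (eIn F R - eIn F S) * (n:ℝ) ^ (R.card - S.card))
      * (n:ℝ) ^ (Fintype.card ι - (R ∪ T₀).card)
      ≤ (n : ℝ) ^ (-(M.toReal⁻¹ * ((jj : ℝ) - 1)))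
        * (n : ℝ) ^ (Fintype.card ι - 2 : ℕ) * (A * qn) ^ eIn F R := by
    rw [pow_sub₀ _ (ne_of_gt hAq0) heIn]
    rw [mul_assoc, ← pow_add, hcards]
    -- now : (A*qn)^eR * ((A*qn)^eS)⁻¹ * n^(u - tv) ≤ n^(-c(jj-1)) * n^(u-2) * (A*qn)^eR
    rw [mul_comm ((A * qn) ^ eIn F R) (((A * qn) ^ eIn F S)⁻¹)]
    rw [mul_assoc]
    rw [mul_comm ((A * qn) ^ eIn F R) ((n:ℝ) ^ (Fintype.card ι - T₀.card))]
    rw [← mul_assoc]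
    apply mul_le_mul_of_nonneg_right _ (by positivity)
    rw [inv_mul_le_iff₀ (by positivity)]
    -- n ^ (u - tv) ≤ (A*qn)^eS * (n^(-c(jj-1)) * n^(u-2))
    have hq_le : qn ^ eIn F S ≤ (A * qn) ^ eIn F S := by
      apply pow_le_pow_left₀ hq0.le
      nlinarith
    have hmain : (n:ℝ) ^ (Fintype.card ι - T₀.card) ≤
        qn ^ eIn F S * ((n : ℝ) ^ (-(M.toReal⁻¹ * ((jj : ℝ) - 1)))
          * (n : ℝ) ^ (Fintype.card ι - 2 : ℕ)) := by
      have e1 : (n:ℝ) ^ (Fintype.card ι - T₀.card)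
          = (n:ℝ) ^ (((Fintype.card ι : ℝ)) - (T₀.card : ℝ)) := by
        rw [← Real.rpow_natCast (n:ℝ) (Fintype.card ι - T₀.card)]
        congr 1
        rw [Nat.cast_sub hT₀u]
      have e2 : (n:ℝ) ^ (Fintype.card ι - 2 : ℕ)
          = (n:ℝ) ^ (((Fintype.card ι : ℝ)) - 2) := by
        rw [← Real.rpow_natCast (n:ℝ) (Fintype.card ι - 2)]
        congr 1
        rw [Nat.cast_sub (le_trans (le_trans (by norm_num) hT₀3') hT₀u)]
        norm_num
      have e3 : qn ^ eIn F S = (n:ℝ) ^ (-t * (eIn F S : ℝ)) := by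
        rw [hqn, Real.rpow_mul hn0.le, Real.rpow_natCast]
      rw [e1, e2, e3, ← Real.rpow_add hn0, ← Real.rpow_add hn0]
      apply Real.rpow_le_rpow_of_exponent_le hn1.le
      have := hkey
      linarith
    calc (n:ℝ) ^ (Fintype.card ι - T₀.card)
        ≤ qn ^ eIn F S * ((n : ℝ) ^ (-(M.toReal⁻¹ * ((jj : ℝ) - 1)))
          * (n : ℝ) ^ (Fintype.card ι - 2 : ℕ)) := hmain
      _ ≤ (A * qn) ^ eIn F S * ((n : ℝ) ^ (-(M.toReal⁻¹ * ((jj : ℝ) - 1)))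
          * (n : ℝ) ^ (Fintype.card ι - 2 : ℕ)) := by
          apply mul_le_mul_of_nonneg_right hq_le (by positivity)
  calc (degI F R GR σ : ℝ) ≤ _ := hcast
    _ ≤ _ := hfinal

lemma two_le_card_of_edge {V : Type*} [Fintype V] (G : SimpleGraph V) (h : 0 < eCnt G) :
    2 ≤ Fintype.card V := by
  rw [eCnt] at h
  obtain ⟨e, he⟩ := Set.nonempty_of_ncard_ne_zero (Nat.pos_iff_ne_zero.mp h)
  induction e with
  | _ x y =>
    exact Fintype.one_lt_card_iff.mpr ⟨x, y, G.ne_of_adj ((SimpleGraph.mem_edgeSet G).mp he)⟩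

lemma main_const_bound (m : ℕ) :
    (2:ℝ) ^ (m.choose 2 - 1) * (((Finset.Icc 2 m).card : ℕ) : ℝ)
      ≤ (m:ℝ) * 2 ^ (m ^ 2) := by
  have h1 : m.choose 2 - 1 ≤ m ^ 2 :=
    calc m.choose 2 - 1 ≤ m.choose 2 := Nat.sub_le _ _
      _ = m * (m-1)/2 := Nat.choose_two_right m
      _ ≤ m * (m-1) := Nat.div_le_self _ _
      _ ≤ m * m := Nat.mul_le_mul_left _ (Nat.sub_le _ _)
      _ = m ^ 2 := (sq m).symm
  have h2 : (Finset.Icc 2 m).card ≤ m := by rw [Nat.card_Icc]; omega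
  calc (2:ℝ) ^ (m.choose 2 - 1) * (((Finset.Icc 2 m).card : ℕ) : ℝ)
      ≤ 2 ^ (m ^ 2) * (m:ℝ) := by
        apply mul_le_mul (pow_le_pow_right₀ one_le_two h1) (by exact_mod_cast h2)
          (by positivity) (by positivity)
    _ = (m:ℝ) * 2 ^ (m ^ 2) := mul_comm _ _

lemma pow_mul_pow_sub'' (x : ℝ) {a u : ℕ} (h : a ≤ u) : x ^ a * x ^ (u - a) = x ^ u := by
  rw [← pow_add]
  congr 1
  omega

end Aux16

theorem stmt16 {ι : Type} [Fintype ι] (F : SimpleGraph ι) (R : Finset ι)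
    (hE : 1 < eCnt (Fm F R))
    (γ : ℝ) (hγ0 : 0 < γ) (hγ1 : γ ≤ 1)
    (A : ℝ) (hA : 1 ≤ A)
    (q : ℕ → ℝ) (hq0 : ∀ n, 0 < q n) (hq1 : ∀ n, q n ≤ 1) :
    ∃ N : ℕ, ∀ n ≥ N, ∀ GR : Finset ((↥R) → Fin n),
      UpperExt F R n GR (A * q n) →
      codegFn F R GR
          (γ⁻¹ * (n : ℝ) ^ (-((m2t (↑R : Set ι) (toSub F) (-Real.logb n (q n)))⁻¹.toReal))) ≤
        γ * eCnt (Fm F R) * 2 ^ (eCnt (Fm F R)) ^ 2 *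
          ((n : ℝ) ^ R.card * (A * q n) ^ eIn F R) / (GR.card : ℝ) := by
  classical
  refine ⟨2, fun n hn GR hUE => ?_⟩
  have hn2 : 2 ≤ n := hn
  have hnR : (2:ℝ) ≤ (n:ℝ) := by exact_mod_cast hn
  have hn0 : (0:ℝ) < n := by linarith
  have hnn : 0 < n := lt_of_lt_of_le two_pos hn2
  have hm0 : 0 < eCnt (Fm F R) := lt_trans one_pos hE
  have hu2 : 2 ≤ Fintype.card ι := two_le_card_of_edge (Fm F R) hm0
  have hAq0 : (0:ℝ) < A * q n := mul_pos (lt_of_lt_of_le one_pos hA) (hq0 n)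
  set m := eCnt (Fm F R) with hm
  set M := m2t (↑R : Set ι) (toSub F) (-Real.logb n (q n)) with hM
  set cR := (M⁻¹).toReal with hcR
  set τ := γ⁻¹ * (n:ℝ) ^ (-cR) with hτ
  set X := (n:ℝ) ^ R.card * (A * q n) ^ eIn F R with hX
  have hX0 : (0:ℝ) < X := by rw [hX]; positivity
  have hRHSnn : (0:ℝ) ≤ γ * (m:ℝ) * 2 ^ m ^ 2 * X / (GR.card : ℝ) := by
    apply div_nonneg _ (Nat.cast_nonneg _)
    exact mul_nonneg (mul_nonneg (mul_nonneg hγ0.le (Nat.cast_nonneg _)) (by positivity))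
      hX0.le
  by_cases hW : (∑ v : Sym2 (ι × Fin n), degI F R GR {v}) = 0
  · rw [codegFn, if_pos hW]
    exact hRHSnn
  rw [codegFn, if_neg hW]
  -- positivity facts
  have hGR0 : 0 < GR.card := by
    rcases Nat.eq_zero_or_pos GR.card with h | h
    · exfalso
      apply hW
      have hGRe : GR = ∅ := Finset.card_eq_zero.mp h
      apply Finset.sum_eq_zero
      intro v _
      rw [degI, Set.ncard_eq_zero (Set.toFinite _)]
      rw [Set.eq_empty_iff_forall_notMem]
      rintro pf ⟨h1, -, -⟩
      rw [hGRe] at h1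
      exact Finset.notMem_empty _ h1
    · exact h
  have hGRr : (0:ℝ) < GR.card := by exact_mod_cast hGR0
  have hXGR : (GR.card : ℝ) ≤ X := by
    have h0 := hUE ∅ (Finset.empty_subset R) (fun _ => ⟨0, hnn⟩)
    have hfil : (GR.filter fun e => ∀ i : ↥R, (i : ι) ∈ (∅ : Finset ι) →
        e i = (fun _ : ι => (⟨0, hnn⟩ : Fin n)) (i : ι)) = GR :=
      Finset.filter_true_of_mem (fun e _ => fun i hi => absurd hi (Finset.notMem_empty _))
    rw [hfil] at h0
    have heIn : eIn F (∅ : Finset ι) = 0 := by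
      rw [eIn, Set.ncard_eq_zero (Set.toFinite _), Set.eq_empty_iff_forall_notMem]
      rintro e ⟨-, h1⟩
      exact Finset.notMem_empty _ (h1 e.out.1 (Sym2.out_fst_mem e))
    rw [heIn, Finset.card_empty, Nat.sub_zero, Nat.sub_zero] at h0
    rw [hX, mul_comm]
    exact h0
  -- bound each term of the sum
  have hterm : ∀ jj ∈ Finset.Icc 2 m,
      (∑ v : Sym2 (ι × Fin n), (djI F R GR jj v : ℝ)) /
          (τ ^ (jj - 1) * ∑ v : Sym2 (ι × Fin n), (degI F R GR {v} : ℝ)) *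
        ((2:ℝ) ^ ((jj - 1).choose 2))⁻¹ ≤ γ * X / (GR.card : ℝ) := by
    intro jj hjjmem
    rw [Finset.mem_Icc] at hjjmem
    obtain ⟨hjj2, hjjm⟩ := hjjmem
    have hp1 : 1 ≤ jj - 1 := Nat.le_sub_of_add_le hjj2
    have hjcast : ((jj - 1 : ℕ) : ℝ) = (jj:ℝ) - 1 := by
      rw [Nat.cast_sub (le_trans one_le_two hjj2), Nat.cast_one]
    have hWrW : (∑ v : Sym2 (ι × Fin n), (degI F R GR {v} : ℝ))
        = ((∑ v : Sym2 (ι × Fin n), degI F R GR {v} : ℕ) : ℝ) := by push_cast; rfl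
    have hWr0 : (0:ℝ) < ∑ v : Sym2 (ι × Fin n), (degI F R GR {v} : ℝ) := by
      rw [hWrW]
      exact_mod_cast Nat.pos_of_ne_zero hW
    have hτ0 : (0:ℝ) < τ := by
      rw [hτ]
      exact mul_pos (inv_pos.mpr hγ0) (Real.rpow_pos_of_pos hn0 _)
    have hτp0 : (0:ℝ) < τ ^ (jj - 1) := pow_pos hτ0 _
    have hdjnn : (0:ℝ) ≤ ∑ v : Sym2 (ι × Fin n), (djI F R GR jj v : ℝ) :=
      Finset.sum_nonneg (fun v _ => Nat.cast_nonneg _)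
    have hTnn : (0:ℝ) ≤ (∑ v : Sym2 (ι × Fin n), (djI F R GR jj v : ℝ)) /
        (τ ^ (jj - 1) * ∑ v : Sym2 (ι × Fin n), (degI F R GR {v} : ℝ)) :=
      div_nonneg hdjnn (mul_pos hτp0 hWr0).le
    have hwle : ((2:ℝ) ^ ((jj - 1).choose 2))⁻¹ ≤ 1 :=
      inv_le_one_of_one_le₀ (one_le_pow₀ one_le_two)
    refine le_trans (mul_le_of_le_one_right hTnn hwle) ?_
    have hγE : γ ≤ γ * X / (GR.card : ℝ) := by
      rw [mul_div_assoc]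
      apply le_mul_of_one_le_right hγ0.le
      exact (one_le_div hGRr).mpr hXGR
    by_cases hc : cR = 0
    · -- crude case
      have hτγ : τ = γ⁻¹ := by rw [hτ, hc, neg_zero, Real.rpow_zero, mul_one]
      have hdj : (∑ v : Sym2 (ι × Fin n), (djI F R GR jj v : ℝ))
          ≤ ∑ v : Sym2 (ι × Fin n), (degI F R GR {v} : ℝ) := by
        apply Finset.sum_le_sum
        intro v _
        have h9 : djI F R GR jj v ≤ degI F R GR {v} :=
          natSup_le_nat _ (fun σi =>
            degI_mono F R GR (Finset.singleton_subset_iff.mpr σi.2.1))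
        exact_mod_cast h9
      calc (∑ v : Sym2 (ι × Fin n), (djI F R GR jj v : ℝ)) /
            (τ ^ (jj - 1) * ∑ v : Sym2 (ι × Fin n), (degI F R GR {v} : ℝ))
          ≤ (∑ v : Sym2 (ι × Fin n), (degI F R GR {v} : ℝ)) /
            (τ ^ (jj - 1) * ∑ v : Sym2 (ι × Fin n), (degI F R GR {v} : ℝ)) :=
            (div_le_div_iff_of_pos_right (mul_pos hτp0 hWr0)).mpr hdj
        _ = (τ ^ (jj - 1))⁻¹ := by
            field_simp
        _ = γ ^ (jj - 1) := by rw [hτγ, inv_pow, inv_inv]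
        _ ≤ γ := by
            have h9 := pow_le_pow_of_le_one hγ0.le hγ1 hp1
            simpa using h9
        _ ≤ γ * X / (GR.card : ℝ) := hγE
    · -- sharp case
      have hm2 : M ≠ ⊤ := by
        intro h
        apply hc
        rw [hcR, h]
        simp
      have hcM : cR = M.toReal⁻¹ := by rw [hcR]; exact ENNReal.toReal_inv M
      have hB0 : (0:ℝ) ≤ (n:ℝ) ^ (-(M.toReal⁻¹ * ((jj:ℝ) - 1)))
          * (n:ℝ) ^ (Fintype.card ι - 2 : ℕ) * (A * q n) ^ eIn F R := by
        apply mul_nonneg (mul_nonneg (Real.rpow_nonneg hn0.le _) (by positivity))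
          (pow_nonneg hAq0.le _)
      have hsum : (∑ v : Sym2 (ι × Fin n), (djI F R GR jj v : ℝ))
          ≤ ((m * n ^ 2 : ℕ) : ℝ) * ((n:ℝ) ^ (-(M.toReal⁻¹ * ((jj:ℝ) - 1)))
            * (n:ℝ) ^ (Fintype.card ι - 2 : ℕ) * (A * q n) ^ eIn F R) := by
        have hzero : ∀ v ∈ (Finset.univ : Finset (Sym2 (ι × Fin n))),
            v ∉ (Finset.univ.filter fun v : Sym2 (ι × Fin n) => degI F R GR {v} ≠ 0) →
            (djI F R GR jj v : ℝ) = 0 := by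
          intro v _ hv
          have h0 : degI F R GR {v} = 0 := by
            by_contra hne
            exact hv (Finset.mem_filter.mpr ⟨Finset.mem_univ v, hne⟩)
          have h9 : djI F R GR jj v = 0 := Nat.le_zero.mp (natSup_le_nat _ (fun σi =>
            le_trans (degI_mono F R GR (Finset.singleton_subset_iff.mpr σi.2.1))
              (le_of_eq h0)))
          rw [h9]
          norm_num
        rw [← Finset.sum_subset (Finset.subset_univ
          (Finset.univ.filter fun v : Sym2 (ι × Fin n) => degI F R GR {v} ≠ 0)) hzero]
        calc ∑ v ∈ (Finset.univ.filter fun v : Sym2 (ι × Fin n) => degI F R GR {v} ≠ 0),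
              (djI F R GR jj v : ℝ)
            ≤ ∑ v ∈ (Finset.univ.filter fun v : Sym2 (ι × Fin n) => degI F R GR {v} ≠ 0),
              ((n:ℝ) ^ (-(M.toReal⁻¹ * ((jj:ℝ) - 1)))
                * (n:ℝ) ^ (Fintype.card ι - 2 : ℕ) * (A * q n) ^ eIn F R) := by
              apply Finset.sum_le_sum
              intro v _
              exact natSup_cast_le _ hB0 (fun σi =>
                key_degI_bound F R GR hA (hq0 n) (hq1 n) hn2 hUE hm2 hjj2 σi.2.2)
          _ = ((Finset.univ.filter fun v : Sym2 (ι × Fin n) =>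
                degI F R GR {v} ≠ 0).card : ℝ) * ((n:ℝ) ^ (-(M.toReal⁻¹ * ((jj:ℝ) - 1)))
                * (n:ℝ) ^ (Fintype.card ι - 2 : ℕ) * (A * q n) ^ eIn F R) := by
              rw [Finset.sum_const, nsmul_eq_mul]
          _ ≤ _ := by
              apply mul_le_mul_of_nonneg_right _ hB0
              exact_mod_cast support_card_le F R GR hnn
      have hWlow : ((GR.card * n ^ (Fintype.card ι - R.card) * m : ℕ) : ℝ)
          ≤ ∑ v : Sym2 (ι × Fin n), (degI F R GR {v} : ℝ) := by
        rw [hWrW]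
        have h9 : GR.card * n ^ (Fintype.card ι - R.card) * m
            ≤ ∑ v : Sym2 (ι × Fin n), degI F R GR {v} := by
          rw [sum_degI_singleton F R GR]
          exact Nat.mul_le_mul_right m (pairs_card_ge F R GR)
        exact_mod_cast h9
      have hWlow0 : (0:ℝ) < ((GR.card * n ^ (Fintype.card ι - R.card) * m : ℕ) : ℝ) := by
        have h9 : 0 < GR.card * n ^ (Fintype.card ι - R.card) * m :=
          Nat.mul_pos (Nat.mul_pos hGR0 (Nat.pow_pos hnn)) hm0
        exact_mod_cast h9
      have hτpow : τ ^ (jj - 1) = (γ⁻¹) ^ (jj - 1)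
          * (n:ℝ) ^ (-(M.toReal⁻¹ * ((jj:ℝ) - 1))) := by
        rw [hτ, mul_pow]
        congr 1
        rw [← Real.rpow_natCast ((n:ℝ) ^ (-cR)) (jj - 1), ← Real.rpow_mul hn0.le]
        congr 1
        rw [hjcast, hcM]
        ring
      calc (∑ v : Sym2 (ι × Fin n), (djI F R GR jj v : ℝ)) /
            (τ ^ (jj - 1) * ∑ v : Sym2 (ι × Fin n), (degI F R GR {v} : ℝ))
          ≤ (((m * n ^ 2 : ℕ) : ℝ) * ((n:ℝ) ^ (-(M.toReal⁻¹ * ((jj:ℝ) - 1)))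
              * (n:ℝ) ^ (Fintype.card ι - 2 : ℕ) * (A * q n) ^ eIn F R)) /
            (τ ^ (jj - 1) * ((GR.card * n ^ (Fintype.card ι - R.card) * m : ℕ) : ℝ)) := by
            apply div_le_div₀ (mul_nonneg (Nat.cast_nonneg _) hB0) hsum
              (mul_pos hτp0 hWlow0)
              (mul_le_mul_of_nonneg_left hWlow hτp0.le)
        _ ≤ γ * X / (GR.card : ℝ) := by
            rw [div_le_div_iff₀ (mul_pos hτp0 hWlow0) hGRr, hτpow, hX]
            push_cast
            have hγp : 1 ≤ γ * (γ⁻¹) ^ (jj - 1) := by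
              have h8 : γ ^ (jj - 1) ≤ γ := by
                have h9 := pow_le_pow_of_le_one hγ0.le hγ1 hp1
                simpa using h9
              have h7 : γ * (γ⁻¹) ^ (jj - 1) = γ / γ ^ (jj - 1) := by
                rw [inv_pow]
                ring
              rw [h7, le_div_iff₀ (pow_pos hγ0 _), one_mul]
              exact h8
            have e1 : (n:ℝ) ^ 2 * (n:ℝ) ^ (Fintype.card ι - 2)
                = (n:ℝ) ^ (Fintype.card ι) := pow_mul_pow_sub'' _ hu2
            have e2 : (n:ℝ) ^ R.card * (n:ℝ) ^ (Fintype.card ι - R.card)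
                = (n:ℝ) ^ (Fintype.card ι) := pow_mul_pow_sub'' _ (Finset.card_le_univ R)
            have hCnn : (0:ℝ) ≤ (n:ℝ) ^ (-(M.toReal⁻¹ * ((jj:ℝ) - 1)))
                * (A * q n) ^ eIn F R * (GR.card : ℝ) * (m : ℝ) :=
              mul_nonneg (mul_nonneg (mul_nonneg (Real.rpow_nonneg hn0.le _)
                (pow_nonneg hAq0.le _)) (Nat.cast_nonneg _)) (Nat.cast_nonneg _)
            calc (m : ℝ) * (n:ℝ) ^ 2 * ((n:ℝ) ^ (-(M.toReal⁻¹ * ((jj:ℝ) - 1)))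
                  * (n:ℝ) ^ (Fintype.card ι - 2 : ℕ) * (A * q n) ^ eIn F R) * (GR.card : ℝ)
                = ((n:ℝ) ^ 2 * (n:ℝ) ^ (Fintype.card ι - 2))
                  * ((n:ℝ) ^ (-(M.toReal⁻¹ * ((jj:ℝ) - 1)))
                    * (A * q n) ^ eIn F R * (GR.card : ℝ) * (m : ℝ)) := by ring
              _ = (n:ℝ) ^ (Fintype.card ι) * ((n:ℝ) ^ (-(M.toReal⁻¹ * ((jj:ℝ) - 1)))
                    * (A * q n) ^ eIn F R * (GR.card : ℝ) * (m : ℝ)) := by rw [e1]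
              _ ≤ (γ * (γ⁻¹) ^ (jj - 1)) * ((n:ℝ) ^ (Fintype.card ι)
                    * ((n:ℝ) ^ (-(M.toReal⁻¹ * ((jj:ℝ) - 1)))
                      * (A * q n) ^ eIn F R * (GR.card : ℝ) * (m : ℝ))) :=
                  le_mul_of_one_le_left (mul_nonneg (by positivity) hCnn) hγp
              _ = (γ * (γ⁻¹) ^ (jj - 1)) * (((n:ℝ) ^ R.card
                      * (n:ℝ) ^ (Fintype.card ι - R.card))
                    * ((n:ℝ) ^ (-(M.toReal⁻¹ * ((jj:ℝ) - 1)))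
                      * (A * q n) ^ eIn F R * (GR.card : ℝ) * (m : ℝ))) := by rw [e2]
              _ = γ * ((n:ℝ) ^ R.card * (A * q n) ^ eIn F R)
                  * ((γ⁻¹) ^ (jj - 1) * (n:ℝ) ^ (-(M.toReal⁻¹ * ((jj:ℝ) - 1)))
                    * ((GR.card : ℝ) * (n:ℝ) ^ (Fintype.card ι - R.card) * (m : ℝ))) := by
                  ring
  -- sum the bounds
  have hEnn : (0:ℝ) ≤ γ * X / (GR.card : ℝ) :=
    div_nonneg (mul_nonneg hγ0.le hX0.le) (Nat.cast_nonneg _)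
  calc (2:ℝ) ^ (m.choose 2 - 1) *
        ∑ jj ∈ Finset.Icc 2 m,
          (∑ v : Sym2 (ι × Fin n), (djI F R GR jj v : ℝ)) /
              (τ ^ (jj - 1) * ∑ v : Sym2 (ι × Fin n), (degI F R GR {v} : ℝ)) *
            ((2:ℝ) ^ ((jj - 1).choose 2))⁻¹
      ≤ (2:ℝ) ^ (m.choose 2 - 1) * ((Finset.Icc 2 m).card • (γ * X / (GR.card : ℝ))) := by
        apply mul_le_mul_of_nonneg_left _ (by positivity)
        exact Finset.sum_le_card_nsmul _ _ _ hterm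
    _ = (2:ℝ) ^ (m.choose 2 - 1) * (((Finset.Icc 2 m).card : ℕ) : ℝ)
          * (γ * X / (GR.card : ℝ)) := by
        rw [nsmul_eq_mul, mul_assoc]
    _ ≤ (m:ℝ) * 2 ^ (m ^ 2) * (γ * X / (GR.card : ℝ)) :=
        mul_le_mul_of_nonneg_right (main_const_bound m) hEnn
    _ = γ * (m:ℝ) * 2 ^ m ^ 2 * X / (GR.card : ℝ) := by
        rw [hX]
        ring

end OG
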